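/- arXiv:1909.05585 — 2 statements merged into one kernel-verified Lean document; each statement's English description precedes it below -/
import Mathlib

section
/- Let d ≥ 2 and let α > d − 2 or α ∈ ℝ \ ℤ. Then for every polynomial p on ℝᵈ, the function x ↦ p(x/|x|²)·|x|^{-α} on ℝᵈ \ {0} can be expressed as a finite real-linear combination of partial derivatives (of all orders) of the function x ↦ |x|^{-α}. -/
open Finset

/-- The partial derivative `∂_i` of a function on `ℝᵈ`, as a classical derivative. -/
noncomputable def pderiv {d : ℕ} (i : Fin d) (g : EuclideanSpace ℝ (Fin d) → ℝ) :
    EuclideanSpace ℝ (Fin d) → ℝ :=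
  fun x => fderiv ℝ g x (EuclideanSpace.single i 1)

/-- The iterated partial derivative `∂^β` associated to a multi-index `β : Fin d → ℕ`. -/
noncomputable def multiPderiv {d : ℕ} (β : Fin d → ℕ) (g : EuclideanSpace ℝ (Fin d) → ℝ) :
    EuclideanSpace ℝ (Fin d) → ℝ :=
  (List.finRange d).foldr (fun i h => (pderiv i)^[β i] h) g

namespace RieszAux

variable {d : ℕ}

local notation "E" => EuclideanSpace ℝ (Fin d)

def Om (d : ℕ) : Set (EuclideanSpace ℝ (Fin d)) := {x | x ≠ 0}

lemma isOpen_Om : IsOpen (Om d) := isOpen_ne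

def Sm (f : EuclideanSpace ℝ (Fin d) → ℝ) : Prop := ContDiffOn ℝ (⊤ : ℕ∞) f (Om d)

lemma Sm.differentiableAt {f : E → ℝ} (hf : Sm f) {x : E} (hx : x ≠ 0) :
    DifferentiableAt ℝ f x :=
  (hf.contDiffAt (isOpen_Om.mem_nhds hx)).differentiableAt (by norm_cast)

lemma Sm.pderiv {f : E → ℝ} (hf : Sm f) (i : Fin d) : Sm (pderiv i f) := by
  have h1 : ContDiffOn ℝ (⊤ : ℕ∞) (fderiv ℝ f) (Om d) :=
    hf.fderiv_of_isOpen isOpen_Om (by norm_cast)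
  exact h1.clm_apply contDiffOn_const

lemma pderiv_congr_on {f h : E → ℝ} (H : ∀ y, y ≠ 0 → f y = h y) {x : E} (hx : x ≠ 0)
    (i : Fin d) : pderiv i f x = pderiv i h x := by
  have hev : f =ᶠ[nhds x] h := by
    filter_upwards [isOpen_Om.mem_nhds hx] with y hy using H y hy
  show fderiv ℝ f x _ = fderiv ℝ h x _
  rw [hev.fderiv_eq]

lemma pderiv_comm {f : E → ℝ} (hf : Sm f) {x : E} (hx : x ≠ 0) (i j : Fin d) :
    pderiv i (pderiv j f) x = pderiv j (pderiv i f) x := by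
  have hct : ContDiffAt ℝ (⊤ : ℕ∞) f x := hf.contDiffAt (isOpen_Om.mem_nhds hx)
  have hsymm : IsSymmSndFDerivAt ℝ f x := hct.isSymmSndFDerivAt (by simp [minSmoothness_of_isRCLikeNormedField]; norm_cast)
  have hdf : DifferentiableAt ℝ (fderiv ℝ f) x :=
    (hct.fderiv_right (m := (⊤:ℕ∞)) (by norm_cast)).differentiableAt (by norm_cast)
  have key : ∀ v w : E, fderiv ℝ (fun y => fderiv ℝ f y v) x w
      = fderiv ℝ (fderiv ℝ f) x w v := by
    intro v w
    have h := (ContinuousLinearMap.apply ℝ ℝ v).hasFDerivAt.comp x hdf.hasFDerivAt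
    have h2 : HasFDerivAt (fun y => fderiv ℝ f y v)
        ((ContinuousLinearMap.apply ℝ ℝ v).comp (fderiv ℝ (fderiv ℝ f) x)) x := h
    rw [h2.fderiv]
    rfl
  show fderiv ℝ (fun y => fderiv ℝ f y (EuclideanSpace.single j 1)) x (EuclideanSpace.single i 1)
      = fderiv ℝ (fun y => fderiv ℝ f y (EuclideanSpace.single i 1)) x (EuclideanSpace.single j 1)
  rw [key, key]
  exact hsymm _ _



lemma Sm.iterate {f : E → ℝ} (hf : Sm f) (i : Fin d) (n : ℕ) :
    Sm ((_root_.pderiv i)^[n] f) := by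
  induction n with
  | zero => exact hf
  | succ n ih => rw [Function.iterate_succ_apply']; exact Sm.pderiv ih i

lemma iterate_pderiv_congr_on {f h : E → ℝ} (H : ∀ y, y ≠ 0 → f y = h y) (i : Fin d) (n : ℕ) :
    ∀ x, x ≠ 0 → (pderiv i)^[n] f x = (pderiv i)^[n] h x := by
  induction n with
  | zero => exact H
  | succ n ih =>
    intro x hx
    rw [Function.iterate_succ_apply', Function.iterate_succ_apply']
    exact pderiv_congr_on ih hx i

lemma pderiv_iterate_comm {f : E → ℝ} (hf : Sm f) (i j : Fin d) (n : ℕ) :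
    ∀ x, x ≠ 0 → pderiv i ((pderiv j)^[n] f) x = (pderiv j)^[n] (pderiv i f) x := by
  induction n with
  | zero => intro x _; rfl
  | succ n ih =>
    intro x hx
    rw [Function.iterate_succ_apply']
    have h1 : ∀ y, y ≠ 0 → pderiv i ((pderiv j)^[n] f) y = (pderiv j)^[n] (pderiv i f) y := ih
    calc pderiv i (pderiv j ((pderiv j)^[n] f)) x
        = pderiv j (pderiv i ((pderiv j)^[n] f)) x := pderiv_comm (hf.iterate j n) hx i j
      _ = pderiv j ((pderiv j)^[n] (pderiv i f)) x := pderiv_congr_on h1 hx j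
      _ = (pderiv j)^[n+1] (pderiv i f) x := by rw [Function.iterate_succ_apply']

noncomputable def lfold (β : Fin d → ℕ) (l : List (Fin d)) (f : E → ℝ) : E → ℝ :=
  l.foldr (fun i h => (pderiv i)^[β i] h) f

lemma Sm.lfold {f : E → ℝ} (hf : Sm f) (β : Fin d → ℕ) (l : List (Fin d)) :
    Sm (lfold β l f) := by
  induction l with
  | nil => exact hf
  | cons a l ih => exact ih.iterate a (β a)

lemma lfold_congr_on {f h : E → ℝ} (H : ∀ y, y ≠ 0 → f y = h y) (β : Fin d → ℕ)
    (l : List (Fin d)) : ∀ x, x ≠ 0 → lfold β l f x = lfold β l h x := by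
  induction l with
  | nil => exact H
  | cons a l ih => exact iterate_pderiv_congr_on ih a (β a)

lemma pderiv_lfold_comm {f : E → ℝ} (hf : Sm f) (β : Fin d → ℕ) (i : Fin d)
    (l : List (Fin d)) :
    ∀ x, x ≠ 0 → pderiv i (lfold β l f) x = lfold β l (pderiv i f) x := by
  induction l with
  | nil => intro x _; rfl
  | cons a l ih =>
    intro x hx
    calc pderiv i ((pderiv a)^[β a] (lfold β l f)) x
        = (pderiv a)^[β a] (pderiv i (lfold β l f)) x :=
          pderiv_iterate_comm (hf.lfold β l) i a (β a) x hx
      _ = (pderiv a)^[β a] (lfold β l (pderiv i f)) x :=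
          iterate_pderiv_congr_on ih a (β a) x hx
      _ = lfold β (a :: l) (pderiv i f) x := rfl

lemma lfold_congr_beta {f : E → ℝ} {β γ : Fin d → ℕ} (l : List (Fin d))
    (H : ∀ j ∈ l, β j = γ j) : lfold β l f = lfold γ l f := by
  induction l with
  | nil => rfl
  | cons a l ih =>
    show (pderiv a)^[β a] (lfold β l f) = (pderiv a)^[γ a] (lfold γ l f)
    rw [H a List.mem_cons_self, ih fun j hj => H j (List.mem_cons_of_mem a hj)]

lemma multiPderiv_eq_lfold (β : Fin d → ℕ) (f : E → ℝ) :
    multiPderiv β f = lfold β (List.finRange d) f := rfl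

lemma Sm.multiPderiv {f : E → ℝ} (hf : Sm f) (β : Fin d → ℕ) : Sm (_root_.multiPderiv β f) :=
  hf.lfold β (List.finRange d)

lemma pderiv_multiPderiv {g : E → ℝ} (hg : Sm g) (β : Fin d → ℕ) (i : Fin d) :
    ∀ x, x ≠ 0 → pderiv i (multiPderiv β g) x
      = multiPderiv (Function.update β i (β i + 1)) g x := by
  intro x hx
  obtain ⟨l₁, l₂, hl⟩ := List.append_of_mem (List.mem_finRange i)
  have hnd : (l₁ ++ i :: l₂).Nodup := hl ▸ List.nodup_finRange d
  rw [List.nodup_append] at hnd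
  have hi1 : i ∉ l₁ := fun h => hnd.2.2 i h i List.mem_cons_self rfl
  have hi2 : i ∉ l₂ := (List.nodup_cons.1 hnd.2.1).1
  set β' := Function.update β i (β i + 1) with hβ'
  have hb1 : ∀ j ∈ l₁, β' j = β j := by
    intro j hj; apply Function.update_of_ne; rintro rfl; exact hi1 hj
  have hb2 : ∀ j ∈ l₂, β' j = β j := by
    intro j hj; apply Function.update_of_ne; rintro rfl; exact hi2 hj
  have e1 : multiPderiv β g = lfold β l₁ ((pderiv i)^[β i] (lfold β l₂ g)) := by
    rw [multiPderiv_eq_lfold, hl]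
    show (l₁ ++ i :: l₂).foldr _ g = _
    rw [List.foldr_append]
    rfl
  have e2 : multiPderiv β' g = lfold β l₁ ((pderiv i)^[β i + 1] (lfold β l₂ g)) := by
    rw [multiPderiv_eq_lfold, hl]
    show (l₁ ++ i :: l₂).foldr _ g = _
    rw [List.foldr_append]
    show lfold β' l₁ ((pderiv i)^[β' i] (lfold β' l₂ g)) = _
    rw [lfold_congr_beta l₂ hb2, lfold_congr_beta l₁ (fun j hj => hb1 j hj), hβ']
    simp only [Function.update_self]
  rw [e1, e2]
  calc pderiv i (lfold β l₁ ((pderiv i)^[β i] (lfold β l₂ g))) x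
      = lfold β l₁ (pderiv i ((pderiv i)^[β i] (lfold β l₂ g))) x :=
        pderiv_lfold_comm ((hg.lfold β l₂).iterate i (β i)) β i l₁ x hx
    _ = lfold β l₁ ((pderiv i)^[β i + 1] (lfold β l₂ g)) x := by
        rw [← Function.iterate_succ_apply' (pderiv i) (β i) (lfold β l₂ g)]

def Rep (g f : EuclideanSpace ℝ (Fin d) → ℝ) : Prop :=
  ∃ c : (Fin d → ℕ) →₀ ℝ, ∀ x : E, x ≠ 0 →
    f x = c.sum fun β a => a * multiPderiv β g x

lemma Rep.congr {g f h : E → ℝ} (hf : Rep g f) (H : ∀ x, x ≠ 0 → f x = h x) : Rep g h := by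
  obtain ⟨c, hc⟩ := hf
  exact ⟨c, fun x hx => (H x hx).symm.trans (hc x hx)⟩

lemma Rep.zero {g : E → ℝ} : Rep g (fun _ => 0) :=
  ⟨0, fun x hx => by simp [Finsupp.sum_zero_index]⟩

lemma Rep.add {g f h : E → ℝ} (hf : Rep g f) (hh : Rep g h) :
    Rep g (fun x => f x + h x) := by
  obtain ⟨c₁, hc₁⟩ := hf
  obtain ⟨c₂, hc₂⟩ := hh
  refine ⟨c₁ + c₂, fun x hx => ?_⟩
  show f x + h x = _
  rw [hc₁ x hx, hc₂ x hx, Finsupp.sum_add_index']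
  · intro β; exact zero_mul _
  · intro β a b; exact add_mul a b _

lemma Rep.smul {g f : E → ℝ} (hf : Rep g f) (a : ℝ) : Rep g (fun x => a * f x) := by
  obtain ⟨c, hc⟩ := hf
  refine ⟨a • c, fun x hx => ?_⟩
  show a * f x = _
  rw [hc x hx, Finsupp.sum_smul_index (fun β => zero_mul (multiPderiv β g x)),
    Finsupp.mul_sum]
  exact Finsupp.sum_congr fun β _ => (mul_assoc a _ _).symm

lemma Rep.sub {g f h : E → ℝ} (hf : Rep g f) (hh : Rep g h) :
    Rep g (fun x => f x - h x) := by
  have := hf.add (hh.smul (-1))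
  exact this.congr fun x hx => by ring

lemma multiPderiv_zero_index (g : E → ℝ) : multiPderiv (fun _ => 0) g = g := by
  unfold multiPderiv
  induction (List.finRange d) with
  | nil => rfl
  | cons a l ih => simpa using ih

lemma Rep.self (g : E → ℝ) : Rep g g := by
  classical
  refine ⟨Finsupp.single (fun _ => 0) 1, fun x hx => ?_⟩
  rw [Finsupp.sum_single_index, multiPderiv_zero_index, one_mul]
  exact zero_mul _

lemma update_succ_injective (i : Fin d) :
    Function.Injective (fun β : Fin d → ℕ => Function.update β i (β i + 1)) := by
  intro β γ h
  funext j
  have hj := congrFun h j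
  by_cases hji : j = i
  · subst hji
    simpa using hj
  · simpa [Function.update_of_ne hji] using hj

lemma pderiv_const_mul {f : E → ℝ} {x : E} (hf : DifferentiableAt ℝ f x) (a : ℝ) (i : Fin d) :
    pderiv i (fun y => a * f y) x = a * pderiv i f x := by
  show fderiv ℝ (fun y => a * f y) x _ = _
  rw [fderiv_const_mul hf a]
  rfl

lemma Rep.pderiv {g : E → ℝ} (hg : Sm g) {f : E → ℝ} (hf : Rep g f) (i : Fin d) :
    Rep g (_root_.pderiv i f) := by
  classical
  obtain ⟨c, hc⟩ := hf
  refine ⟨Finsupp.mapDomain (fun β => Function.update β i (β i + 1)) c, fun x hx => ?_⟩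
  have h1 : _root_.pderiv i f x
      = _root_.pderiv i (fun y => ∑ β ∈ c.support, c β * multiPderiv β g y) x :=
    pderiv_congr_on (fun y hy => hc y hy) hx i
  have hdiff : ∀ β ∈ c.support, DifferentiableAt ℝ (fun y => c β * multiPderiv β g y) x :=
    fun β _ => ((hg.multiPderiv β).differentiableAt hx).const_mul (c β)
  have h2 : _root_.pderiv i (fun y => ∑ β ∈ c.support, c β * multiPderiv β g y) x
      = ∑ β ∈ c.support, _root_.pderiv i (fun y => c β * multiPderiv β g y) x := by
    show fderiv ℝ _ x _ = _
    rw [fderiv_fun_sum hdiff, ContinuousLinearMap.sum_apply]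
    rfl
  have h3 : ∀ β ∈ c.support, _root_.pderiv i (fun y => c β * multiPderiv β g y) x
      = c β * multiPderiv (Function.update β i (β i + 1)) g x := by
    intro β _
    rw [pderiv_const_mul ((hg.multiPderiv β).differentiableAt hx) (c β) i,
      pderiv_multiPderiv hg β i x hx]
  rw [h1, h2, Finset.sum_congr rfl h3,
    Finsupp.sum_mapDomain_index_inj (update_succ_injective i)]
  rfl

lemma Rep.finsetSum {g : E → ℝ} {ι : Type*} (s : Finset ι) (f : ι → E → ℝ)
    (h : ∀ m ∈ s, Rep g (f m)) : Rep g (fun x => ∑ m ∈ s, f m x) := by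
  classical
  induction s using Finset.induction with
  | empty => exact Rep.zero.congr (by simp)
  | @insert a s ha ih =>
    have := (h a (Finset.mem_insert_self a s)).add
      (ih fun m hm => h m (Finset.mem_insert_of_mem hm))
    exact this.congr fun x hx => by rw [Finset.sum_insert ha]

noncomputable def P (m : Fin d → ℕ) (t : ℝ) : EuclideanSpace ℝ (Fin d) → ℝ :=
  fun x => (∏ j, x j ^ m j) * ‖x‖ ^ t

lemma Sm_ker (α : ℝ) : Sm (fun y : E => ‖y‖ ^ (-α)) := by
  intro x hx
  have hx' : x ≠ 0 := hx
  have h1 : ContDiffAt ℝ (⊤ : ℕ∞) (fun y : E => ‖y‖) x := contDiffAt_norm ℝ hx'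
  have h2 : ContDiffAt ℝ (⊤ : ℕ∞) (fun y : E => ‖y‖ ^ (-α)) x :=
    h1.rpow_const_of_ne (norm_ne_zero_iff.2 hx')
  exact h2.contDiffWithinAt

lemma sq_rpow_half (y : E) (s : ℝ) : ((‖y‖ ^ 2 : ℝ)) ^ (s / 2) = ‖y‖ ^ s := by
  rw [← Real.rpow_natCast ‖y‖ 2, ← Real.rpow_mul (norm_nonneg y)]
  congr 1
  ring

lemma prod_update (x : E) (m : Fin d → ℕ) (i : Fin d) (k : ℕ) :
    ∏ j, x j ^ (Function.update m i k) j = x i ^ k * ∏ j ∈ Finset.univ.erase i, x j ^ m j := by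
  rw [← Finset.mul_prod_erase Finset.univ _ (Finset.mem_univ i), Function.update_self]
  congr 1
  exact Finset.prod_congr rfl fun j hj => by
    rw [Function.update_of_ne (Finset.ne_of_mem_erase hj)]

lemma prod_eq_update_self (x : E) (m : Fin d → ℕ) (i : Fin d) :
    ∏ j, x j ^ m j = x i ^ m i * ∏ j ∈ Finset.univ.erase i, x j ^ m j := by
  rw [← Finset.mul_prod_erase Finset.univ _ (Finset.mem_univ i)]

lemma P_hasderiv (m : Fin d → ℕ) (t : ℝ) {x : E} (hx : x ≠ 0) :
    DifferentiableAt ℝ (P m t) x ∧ ∀ i, pderiv i (P m t) x =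
      (m i : ℝ) * P (Function.update m i (m i - 1)) t x
        + t * P (Function.update m i (m i + 1)) (t - 2) x := by
  classical
  have hnorm : (0:ℝ) < ‖x‖ := norm_pos_iff.2 hx
  have hn2 : (‖x‖ ^ 2 : ℝ) ≠ 0 := by positivity
  -- derivative of the norm-power part
  have hN : HasFDerivAt (fun y : E => ‖y‖ ^ 2) ((2:ℕ) • (innerSL ℝ x)) x :=
    (hasStrictFDerivAt_norm_sq x).hasFDerivAt
  have hR0 : HasFDerivAt (fun y : E => (‖y‖ ^ 2 : ℝ) ^ (t/2))
      (((t/2) * (‖x‖ ^ 2 : ℝ) ^ (t/2 - 1)) • ((2:ℕ) • (innerSL ℝ x))) x :=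
    hN.rpow_const (Or.inl hn2)
  have hfun : (fun y : E => (‖y‖ ^ 2 : ℝ) ^ (t/2)) = fun y : E => ‖y‖ ^ t := by
    funext y; exact sq_rpow_half y t
  rw [hfun] at hR0
  -- derivative of the monomial part
  have hprod : HasFDerivAt (fun y : E => ∏ j, y j ^ m j)
      (∑ j, (∏ l ∈ Finset.univ.erase j, x l ^ m l) •
        (((m j : ℝ) * x j ^ (m j - 1)) • (EuclideanSpace.proj j : E →L[ℝ] ℝ))) x := by
    have h := HasFDerivAt.finset_prod (u := (Finset.univ : Finset (Fin d)))
      (g := fun j (y : E) => y j ^ m j)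
      (g' := fun j => ((m j : ℝ) * x j ^ (m j - 1)) • (EuclideanSpace.proj j : E →L[ℝ] ℝ))
      (fun j _ => (hasDerivAt_pow (m j) (x j)).comp_hasFDerivAt x
        (EuclideanSpace.proj j : E →L[ℝ] ℝ).hasFDerivAt)
    exact h
  have hP : HasFDerivAt (P m t)
      ((∏ j, x j ^ m j) • (((t/2) * (‖x‖ ^ 2 : ℝ) ^ (t/2 - 1)) • ((2:ℕ) • (innerSL ℝ x)))
        + (‖x‖ ^ t) • (∑ j, (∏ l ∈ Finset.univ.erase j, x l ^ m l) •
            (((m j : ℝ) * x j ^ (m j - 1)) • (EuclideanSpace.proj j : E →L[ℝ] ℝ)))) x :=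
    hprod.mul hR0
  refine ⟨hP.differentiableAt, fun i => ?_⟩
  have hval : pderiv i (P m t) x
      = ((∏ j, x j ^ m j) • (((t/2) * (‖x‖ ^ 2 : ℝ) ^ (t/2 - 1)) • ((2:ℕ) • (innerSL ℝ x)))
        + (‖x‖ ^ t) • (∑ j, (∏ l ∈ Finset.univ.erase j, x l ^ m l) •
            (((m j : ℝ) * x j ^ (m j - 1)) • (EuclideanSpace.proj j : E →L[ℝ] ℝ))))
          (EuclideanSpace.single i 1) := by
    show fderiv ℝ (P m t) x _ = _
    rw [hP.fderiv]
  rw [hval]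
  simp only [ContinuousLinearMap.add_apply, ContinuousLinearMap.smul_apply,
    ContinuousLinearMap.sum_apply, smul_eq_mul, nsmul_eq_mul, innerSL_apply_apply,
    EuclideanSpace.inner_single_right, conj_trivial, PiLp.proj_apply,
    EuclideanSpace.single_apply, mul_ite, mul_one, mul_zero, Finset.sum_ite_eq, Finset.sum_ite_eq',
    Finset.mem_univ, if_true]
  have hpow2 : ((‖x‖ ^ 2 : ℝ)) ^ (t/2 - 1) = ‖x‖ ^ (t - 2) := by
    rw [show t/2 - 1 = (t-2)/2 by ring]
    exact sq_rpow_half x (t-2)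
  rw [hpow2]
  show _ = (m i : ℝ) * P (Function.update m i (m i - 1)) t x
    + t * P (Function.update m i (m i + 1)) (t - 2) x
  unfold P
  rw [prod_update x m i (m i - 1), prod_update x m i (m i + 1),
    prod_eq_update_self x m i, pow_succ]
  ring

lemma sum_coord_sq (x : E) : ∑ i, x i ^ 2 = ‖x‖ ^ 2 := by
  rw [← real_inner_self_eq_norm_sq, PiLp.inner_apply]
  simp [sq, RCLike.inner_apply, conj_trivial]

lemma P_zero_apply (t : ℝ) (x : E) : P (fun _ : Fin d => 0) t x = ‖x‖ ^ t := by
  simp [P]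

lemma rep_radial {α : ℝ} (hA : ∀ k : ℕ, α + 2*k ≠ 0) (hB : ∀ k : ℕ, α + 2*k + 2 - d ≠ 0) :
    ∀ k : ℕ, Rep (fun y : E => ‖y‖ ^ (-α)) (P (fun _ => 0) (-(α + 2*k))) := by
  intro k
  induction k with
  | zero =>
    refine (Rep.self _).congr fun x hx => ?_
    rw [P_zero_apply]
    norm_num
  | succ k ih =>
    set ker : E → ℝ := fun y : E => ‖y‖ ^ (-α) with hker
    have hSm : Sm ker := Sm_ker α
    set γ : ℝ := α + 2*k with hγdef
    have hγ : γ ≠ 0 := hA k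
    have hc : γ * (γ + 2 - d) ≠ 0 := by
      refine mul_ne_zero hγ fun h => hB k ?_
      linarith [h]
    have h2 : ∀ i : Fin d, Rep ker (pderiv i (pderiv i (P (fun _ => 0) (-γ)))) :=
      fun i => (Rep.pderiv hSm (Rep.pderiv hSm ih i) i)
    have hsum : Rep ker (fun x => ∑ i, pderiv i (pderiv i (P (fun _ => 0) (-γ))) x) :=
      Rep.finsetSum Finset.univ _ fun i _ => h2 i
    have heval : ∀ x : E, x ≠ 0 → (∑ i, pderiv i (pderiv i (P (fun _ => 0) (-γ))) x)
        = (γ * (γ + 2 - d)) * P (fun _ => 0) (-(α + 2*(k+1:ℕ))) x := by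
      intro x hx
      have hnorm : (0:ℝ) < ‖x‖ := norm_pos_iff.2 hx
      have h1 : ∀ (i : Fin d) (y : E), y ≠ 0 → pderiv i (P (fun _ => 0) (-γ)) y
          = -γ * P (Function.update (fun _ : Fin d => 0) i 1) (-γ - 2) y := by
        intro i y hy
        have h := (P_hasderiv (fun _ => 0) (-γ) hy).2 i
        simpa using h
      have hupd : ∀ i : Fin d, P (Function.update (fun _ : Fin d => 0) i 2)
          (-γ - 2 - 2) x = x i ^ 2 * ‖x‖ ^ (-γ - 2 - 2) := by
        intro i
        show (∏ j, x j ^ (Function.update (fun _ : Fin d => 0) i 2) j)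
            * ‖x‖ ^ (-γ - 2 - 2) = _
        rw [prod_update]
        simp
      have h3 : ∀ i : Fin d, pderiv i (pderiv i (P (fun _ => 0) (-γ))) x
          = -γ * (‖x‖ ^ (-γ - 2) + (-γ - 2) * (x i ^ 2 * ‖x‖ ^ (-γ - 2 - 2))) := by
        intro i
        have e1 := pderiv_congr_on
          (h := fun y => -γ * P (Function.update (fun _ : Fin d => 0) i 1) (-γ - 2) y)
          (h1 i) hx i
        rw [e1, pderiv_const_mul (P_hasderiv _ _ hx).1 (-γ) i,
          (P_hasderiv (Function.update (fun _ : Fin d => 0) i 1) (-γ-2) hx).2 i]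
        rw [Function.update_self, Function.update_idem, Function.update_idem]
        norm_num
        exact Or.inl (by rw [P_zero_apply, hupd i])
      rw [Finset.sum_congr rfl fun i _ => h3 i]
      have hsq : ∑ i, (x i ^ 2 : ℝ) = ‖x‖ ^ 2 := sum_coord_sq x
      have hx2 : (‖x‖ ^ 2 : ℝ) * ‖x‖ ^ (-γ - 2 - 2) = ‖x‖ ^ (-γ - 2) := by
        rw [← Real.rpow_natCast ‖x‖ 2, ← Real.rpow_add hnorm]
        congr 1
        norm_num
      have hexp : (-(α + 2*((k+1:ℕ):ℝ))) = -γ - 2 := by push_cast [hγdef]; ring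
      rw [P_zero_apply, hexp]
      have hsplit : ∀ i : Fin d,
          -γ * (‖x‖ ^ (-γ - 2) + (-γ - 2) * (x i ^ 2 * ‖x‖ ^ (-γ - 2 - 2)))
          = -γ * ‖x‖ ^ (-γ - 2) + (-γ * (-γ - 2) * ‖x‖ ^ (-γ - 2 - 2)) * x i ^ 2 := by
        intro i; ring
      rw [Finset.sum_congr rfl fun i _ => hsplit i, Finset.sum_add_distrib,
        Finset.sum_const, ← Finset.mul_sum, hsq]
      simp only [Finset.card_univ, Fintype.card_fin, nsmul_eq_mul]
      linear_combination (-γ * (-γ-2)) * hx2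
    refine (hsum.smul (γ * (γ + 2 - d))⁻¹).congr fun x hx => ?_
    rw [heval x hx, ← mul_assoc, inv_mul_cancel₀ hc, one_mul]

lemma rep_monomial {α : ℝ} (hA : ∀ k : ℕ, α + 2*k ≠ 0) (hB : ∀ k : ℕ, α + 2*k + 2 - d ≠ 0) :
    ∀ n : ℕ, ∀ m : Fin d → ℕ, (∑ j, m j) = n → ∀ k : ℕ, n ≤ k →
      Rep (fun y : E => ‖y‖ ^ (-α)) (P m (-(α + 2*k))) := by
  intro n
  induction n using Nat.strong_induction_on with
  | _ n IH =>
  intro m hm k hk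
  rcases Nat.eq_zero_or_pos n with hn0 | hn1
  · subst hn0
    have hm0 : m = fun _ => 0 := by
      funext j
      exact (Finset.sum_eq_zero_iff).1 hm j (Finset.mem_univ j)
    rw [hm0]
    exact rep_radial hA hB k
  · set ker : E → ℝ := fun y : E => ‖y‖ ^ (-α) with hker
    have hSm : Sm ker := Sm_ker α
    have hk1 : 1 ≤ k := le_trans hn1 hk
    have hmne : (∑ j, m j) ≠ 0 := by omega
    obtain ⟨i, _, hi⟩ := Finset.exists_ne_zero_of_sum_ne_zero hmne
    set m₁ := Function.update m i (m i - 1) with hm₁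
    have herase : m i + ∑ j ∈ Finset.univ.erase i, m j = n := by
      rw [← hm]
      exact Finset.add_sum_erase Finset.univ m (Finset.mem_univ i)
    have hsum1 : (∑ j, m₁ j) = n - 1 := by
      rw [hm₁, Finset.sum_update_of_mem (Finset.mem_univ i),
        Finset.sdiff_singleton_eq_erase]
      omega
    set t : ℝ := -(α + 2*((k-1 : ℕ) : ℝ)) with ht
    have ih1 : Rep ker (P m₁ t) := IH (n-1) (by omega) m₁ hsum1 (k-1) (by omega)
    have hder : Rep ker (pderiv i (P m₁ t)) := Rep.pderiv hSm ih1 i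
    set m₂ := Function.update m₁ i (m₁ i - 1) with hm₂
    have hform : ∀ x : E, x ≠ 0 → pderiv i (P m₁ t) x
        = (m₁ i : ℝ) * P m₂ t x + t * P m (t - 2) x := by
      intro x hx
      have h := (P_hasderiv m₁ t hx).2 i
      have hup : Function.update m₁ i (m₁ i + 1) = m := by
        rw [hm₁]
        funext j
        by_cases hj : j = i
        · subst hj
          simp only [Function.update_idem, Function.update_self]
          omega
        · simp [Function.update_of_ne hj]
      rw [h, hup, ← hm₂]
    have hlow : Rep ker (fun x => (m₁ i : ℝ) * P m₂ t x) := by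
      rcases Nat.eq_zero_or_pos (m₁ i) with h0 | h1
      · exact Rep.zero.congr (fun x hx => by rw [h0]; simp)
      · have herase1 : m₁ i + ∑ j ∈ Finset.univ.erase i, m₁ j = n - 1 := by
          rw [← hsum1]
          exact Finset.add_sum_erase Finset.univ m₁ (Finset.mem_univ i)
        have hsum2 : (∑ j, m₂ j) = n - 2 := by
          rw [hm₂, Finset.sum_update_of_mem (Finset.mem_univ i),
            Finset.sdiff_singleton_eq_erase]
          omega
        exact (IH (n-2) (by omega) m₂ hsum2 (k-1) (by omega)).smul _
    have htne : t ≠ 0 := by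
      rw [ht]
      exact neg_ne_zero.2 (hA (k-1))
    have hfin : Rep ker (fun x => t⁻¹ * (pderiv i (P m₁ t) x - (m₁ i : ℝ) * P m₂ t x)) :=
      (hder.sub hlow).smul t⁻¹
    refine hfin.congr fun x hx => ?_
    rw [hform x hx]
    have hexp : t - 2 = -(α + 2*(k:ℝ)) := by
      rw [ht, Nat.cast_sub hk1]
      push_cast
      ring
    rw [← hexp]
    field_simp
    ring

lemma kelvin_term (α : ℝ) (m : Fin d → ℕ) {x : E} (hx : x ≠ 0) :
    (∏ i, (x i * (‖x‖^2)⁻¹) ^ m i) * ‖x‖ ^ (-α)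
      = P m (-(α + 2*((∑ j, m j : ℕ) : ℝ))) x := by
  have hnorm : (0:ℝ) < ‖x‖ := norm_pos_iff.2 hx
  set K : ℕ := ∑ j, m j with hK
  have h1 : ∏ i, (x i * (‖x‖^2)⁻¹) ^ m i = (∏ i, x i ^ m i) * ((‖x‖^2 : ℝ)⁻¹) ^ K := by
    rw [hK, ← Finset.prod_pow_eq_pow_sum, ← Finset.prod_mul_distrib]
    exact Finset.prod_congr rfl fun i _ => mul_pow _ _ _
  have h2 : ((‖x‖^2 : ℝ)⁻¹) ^ K * ‖x‖ ^ (-α) = ‖x‖ ^ (-(α + 2*(K:ℝ))) := by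
    rw [inv_pow, ← pow_mul]
    rw [show ((‖x‖ ^ (2*K) : ℝ))⁻¹ = ‖x‖ ^ (-((2*K : ℕ) : ℝ)) by
      rw [← Real.rpow_natCast ‖x‖ (2*K), ← Real.rpow_neg (norm_nonneg x)]]
    rw [← Real.rpow_add hnorm]
    congr 1
    push_cast
    ring
  show _ = (∏ j, x j ^ m j) * ‖x‖ ^ (-(α + 2*(K:ℝ)))
  rw [h1, mul_assoc, h2]
end RieszAux

/-- Lemma 2 (generating polynomials): for `d ≥ 2` and `α > d − 2` or `α ∉ ℤ`, every product
`p(K(x))·|x|^{-α}` (with `K(x) = x|x|^{-2}` the Kelvin transform and `p` a polynomial) is a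
finite real-linear combination of iterated partial derivatives of the kernel `x ↦ |x|^{-α}`
on `ℝᵈ \ {0}`. -/
theorem polynomial_times_kernel_is_combination_of_derivatives
    (d : ℕ) (hd : 2 ≤ d) (α : ℝ)
    (hα : (d : ℝ) - 2 < α ∨ ∀ n : ℤ, α ≠ (n : ℝ))
    (p : MvPolynomial (Fin d) ℝ) :
    ∃ (s : Finset (Fin d → ℕ)) (c : (Fin d → ℕ) → ℝ),
      ∀ x : EuclideanSpace ℝ (Fin d), x ≠ 0 →
        MvPolynomial.eval (fun i => x i * (‖x‖ ^ 2)⁻¹) p * ‖x‖ ^ (-α)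
          = ∑ β ∈ s, c β *
              multiPderiv β (fun y : EuclideanSpace ℝ (Fin d) => ‖y‖ ^ (-α)) x := by

  classical
  have hd2 : (2:ℝ) ≤ (d:ℝ) := by exact_mod_cast hd
  have hA : ∀ k : ℕ, α + 2*(k:ℝ) ≠ 0 := by
    intro k h
    rcases hα with h1 | h2
    · have hk : (0:ℝ) ≤ (k:ℝ) := Nat.cast_nonneg k
      linarith
    · exact h2 (-(2*(k:ℤ))) (by push_cast; linarith)
  have hB : ∀ k : ℕ, α + 2*(k:ℝ) + 2 - (d:ℝ) ≠ 0 := by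
    intro k h
    rcases hα with h1 | h2
    · have hk : (0:ℝ) ≤ (k:ℝ) := Nat.cast_nonneg k
      linarith
    · exact h2 ((d:ℤ) - 2 - 2*(k:ℤ)) (by push_cast; linarith)
  have hrep : RieszAux.Rep (fun y : EuclideanSpace ℝ (Fin d) => ‖y‖ ^ (-α))
      (fun x => ∑ m ∈ p.support,
        MvPolynomial.coeff m p * RieszAux.P m (-(α + 2*((∑ j, m j : ℕ) : ℝ))) x) := by
    apply RieszAux.Rep.finsetSum
    intro m _
    exact (RieszAux.rep_monomial hA hB (∑ j, m j) m rfl (∑ j, m j) le_rfl).smul _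
  obtain ⟨c, hc⟩ := hrep
  refine ⟨c.support, ⇑c, fun x hx => ?_⟩
  have hgoal : (∑ β ∈ c.support, c β *
      multiPderiv β (fun y : EuclideanSpace ℝ (Fin d) => ‖y‖ ^ (-α)) x)
      = c.sum fun β a => a * multiPderiv β (fun y : EuclideanSpace ℝ (Fin d) => ‖y‖ ^ (-α)) x :=
    rfl
  rw [hgoal, ← hc x hx]
  rw [MvPolynomial.eval_eq', Finset.sum_mul]
  refine Finset.sum_congr rfl fun m _ => ?_
  rw [mul_assoc, RieszAux.kelvin_term α m hx]
end

section
/- For every m ∈ ℕ, the ratio ((n − 2m − 1)!! · n!!) / ((n − 2m)!! · (n − 1)!!) tends to 1 as n → ∞ along even integers n > 2m. -/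
open Filter Nat

lemma dfac_step (m j : ℕ) (h : m + 2 ≤ j) :
    (((2 * j - 2 * (m + 1) - 1)‼ * (2 * j)‼ : ℕ) : ℝ) /
        (((2 * j - 2 * (m + 1))‼ * (2 * j - 1)‼ : ℕ) : ℝ)
      = ((((2 * j - 2 * m - 1)‼ * (2 * j)‼ : ℕ) : ℝ) /
          (((2 * j - 2 * m)‼ * (2 * j - 1)‼ : ℕ) : ℝ)) *
        (((2 * j - 2 * m : ℕ) : ℝ) / ((2 * j - 2 * m - 1 : ℕ) : ℝ)) := by
  obtain ⟨k, rfl⟩ : ∃ k, j = k + (m + 2) := ⟨j - (m + 2), by omega⟩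
  have e1 : 2 * (k + (m + 2)) - 2 * (m + 1) - 1 = 2 * k + 1 := by omega
  have e2 : 2 * (k + (m + 2)) - 2 * (m + 1) = 2 * k + 2 := by omega
  have e3 : 2 * (k + (m + 2)) - 2 * m - 1 = 2 * k + 3 := by omega
  have e4 : 2 * (k + (m + 2)) - 2 * m = 2 * k + 4 := by omega
  rw [e1, e2, e3, e4]
  have d3 : (2 * k + 3)‼ = (2 * k + 3) * (2 * k + 1)‼ := by
    rw [show 2 * k + 3 = 2 * k + 1 + 2 from rfl, Nat.doubleFactorial_add_two]
  have d4 : (2 * k + 4)‼ = (2 * k + 4) * (2 * k + 2)‼ := by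
    rw [show 2 * k + 4 = 2 * k + 2 + 2 from rfl, Nat.doubleFactorial_add_two]
  rw [d3, d4]
  have h1 : ((2 * k + 1)‼ : ℝ) ≠ 0 := Nat.cast_ne_zero.mpr (Nat.doubleFactorial_pos _).ne'
  have h2 : ((2 * k + 2)‼ : ℝ) ≠ 0 := Nat.cast_ne_zero.mpr (Nat.doubleFactorial_pos _).ne'
  have h5 : ((2 * (k + (m + 2)))‼ : ℝ) ≠ 0 := Nat.cast_ne_zero.mpr (Nat.doubleFactorial_pos _).ne'
  have h6 : ((2 * (k + (m + 2)) - 1)‼ : ℝ) ≠ 0 :=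
    Nat.cast_ne_zero.mpr (Nat.doubleFactorial_pos _).ne'
  have h3 : ((2 * k + 3 : ℕ) : ℝ) ≠ 0 := by positivity
  have h4 : ((2 * k + 4 : ℕ) : ℝ) ≠ 0 := by positivity
  push_cast
  field_simp

/-- For every `m ∈ ℕ`, the ratio `((n − 2m − 1)‼ · n‼) / ((n − 2m)‼ · (n − 1)‼)` tends to `1`
as `n → ∞` along even integers `n = 2j > 2m`. -/
theorem doubleFactorial_ratio_tendsto_one (m : ℕ) :
    Tendsto
      (fun j : ℕ =>
        (((2 * j - 2 * m - 1)‼ * (2 * j)‼ : ℕ) : ℝ) /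
          (((2 * j - 2 * m)‼ * (2 * j - 1)‼ : ℕ) : ℝ))
      atTop (nhds 1) := by
  induction m with
  | zero =>
    have : (fun j : ℕ =>
        (((2 * j - 2 * 0 - 1)‼ * (2 * j)‼ : ℕ) : ℝ) /
          (((2 * j - 2 * 0)‼ * (2 * j - 1)‼ : ℕ) : ℝ)) = fun _ => (1 : ℝ) := by
      funext j
      simp only [Nat.mul_zero, Nat.sub_zero]
      rw [Nat.mul_comm]
      exact div_self (Nat.cast_ne_zero.mpr
        (Nat.mul_pos (Nat.doubleFactorial_pos _) (Nat.doubleFactorial_pos _)).ne')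
    rw [this]
    exact tendsto_const_nhds
  | succ m ih =>
    have hg : Tendsto (fun j : ℕ => 2 * j - 2 * m) atTop atTop :=
      tendsto_atTop_atTop.mpr fun b => ⟨b + m, fun j hj => by omega⟩
    have t0 : Tendsto (fun n : ℕ => (n : ℝ) / ((n : ℝ) - 1)) atTop (nhds 1) := by
      have := tendsto_natCast_div_add_atTop (-1 : ℝ)
      simpa [sub_eq_add_neg] using this
    have haux : Tendsto
        (fun j : ℕ => ((2 * j - 2 * m : ℕ) : ℝ) / ((2 * j - 2 * m - 1 : ℕ) : ℝ))
        atTop (nhds 1) := by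
      refine Tendsto.congr' ?_ (t0.comp hg)
      filter_upwards [eventually_ge_atTop (m + 1)] with j hj
      have : ((2 * j - 2 * m - 1 : ℕ) : ℝ) = ((2 * j - 2 * m : ℕ) : ℝ) - 1 := by
        have h1 : 1 ≤ 2 * j - 2 * m := by omega
        push_cast [Nat.cast_sub h1]
        ring
      simp [Function.comp, this]
    have := ih.mul haux
    rw [mul_one] at this
    refine Tendsto.congr' ?_ this
    filter_upwards [eventually_ge_atTop (m + 2)] with j hj
    exact (dfac_step m j hj).symm
end
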